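/- Let 0 < h < 1 and let δ_h > 0 satisfy 1/4 + δ_h·tan(arctan(1/(2δ_h)) + δ_h·log h) − δ_h² = 0 with arctan(1/(2δ_h)) + δ_h·log h ∈ (−π/2, π/2). Define u_h : [0,1] → ℝ by u_h(x) = (x/√h)·cos(arctan(1/(2δ_h)) + δ_h·log h) for x ∈ [0,h] and u_h(x) = √x·cos(arctan(1/(2δ_h)) + δ_h·log x) for x ∈ (h,1]. Then u_h ∈ U_h, u_h is not identically zero, and ∫₀¹ u_h'(x)² dx = (1/4 + δ_h²)·∫₀¹ x⁻² u_h(x)² dx; in particular μ_h ≤ 1/4 + δ_h². -/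

import Mathlib

open MeasureTheory Real Set Filter

noncomputable section

/-- `u ∈ H¹(0,1)` with weak derivative `u'`: `u` is continuous on `[0,1]`,
`u'` is (square-)integrable on `(0,1)`, and `u(x) = u(0) + ∫₀ˣ u'`. -/
def IsH1 (u u' : ℝ → ℝ) : Prop :=
  ContinuousOn u (Set.Icc 0 1) ∧
  IntervalIntegrable u' volume 0 1 ∧
  IntegrableOn (fun t => u' t ^ 2) (Set.Ioo 0 1) ∧
  ∀ x ∈ Set.Icc (0:ℝ) 1, u x = u 0 + ∫ t in (0:ℝ)..x, u' t

/-- `u ∈ U_h` (with weak derivative `u'`): `u ∈ H¹(0,1)`, `u(0) = 0`, and `u` is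
affine on `[0,h]`, i.e. `u(x) = (x/h)·u(h)` there. -/
def MemUh (h : ℝ) (u u' : ℝ → ℝ) : Prop :=
  IsH1 u u' ∧ u 0 = 0 ∧ ∀ x ∈ Set.Icc (0:ℝ) h, u x = (x / h) * u h

/-- `μ_h`: the infimum of the Hardy Rayleigh quotient over nonzero members of `U_h`. -/
def muh (h : ℝ) : ℝ :=
  sInf { s : ℝ | ∃ u u' : ℝ → ℝ, MemUh h u u' ∧ (∃ x ∈ Set.Icc (0:ℝ) 1, u x ≠ 0) ∧
    s = (∫ x in (0:ℝ)..1, (u' x) ^ 2) / (∫ x in (0:ℝ)..1, (u x) ^ 2 / x ^ 2) }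

/-- The near-optimal function `u_h`. -/
def uh (h δ : ℝ) : ℝ → ℝ := fun x =>
  if x ≤ h then (x / Real.sqrt h) * Real.cos (Real.arctan (1 / (2 * δ)) + δ * Real.log h)
  else Real.sqrt x * Real.cos (Real.arctan (1 / (2 * δ)) + δ * Real.log x)

def thf (δ x : ℝ) : ℝ := Real.arctan (1/(2*δ)) + δ * Real.log x

def gf (δ : ℝ) : ℝ → ℝ := fun x =>
  1 / (2 * Real.sqrt x) * Real.cos (thf δ x) + Real.sqrt x * (-Real.sin (thf δ x) * (δ * x⁻¹))

def Gf (δ : ℝ) : ℝ → ℝ := fun x => Real.sqrt x * Real.cos (thf δ x)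

def Ff (δ : ℝ) : ℝ → ℝ := fun x =>
  (1/8 + δ^2/2) * Real.log x + (1/8 - δ^2/2)/(2*δ) * Real.sin (2 * thf δ x)
    + (1/4) * Real.cos (2 * thf δ x)

def Hf (δ : ℝ) : ℝ → ℝ := fun x =>
  (1/2) * Real.log x + (1/(4*δ)) * Real.sin (2 * thf δ x)

lemma hasDerivAt_thf (δ : ℝ) {x : ℝ} (hx : x ≠ 0) :
    HasDerivAt (thf δ) (δ * x⁻¹) x := by
  unfold thf
  exact ((Real.hasDerivAt_log hx).const_mul δ).const_add (Real.arctan (1/(2*δ)))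

lemma hasDerivAt_Gf (δ : ℝ) {x : ℝ} (hx : 0 < x) :
    HasDerivAt (Gf δ) (gf δ x) x := by
  have h1 := Real.hasDerivAt_sqrt hx.ne'
  have h2 := (Real.hasDerivAt_cos (thf δ x)).comp x (hasDerivAt_thf δ hx.ne')
  have := h1.mul h2
  unfold Gf gf
  exact this

lemma gf_eq (δ : ℝ) {x : ℝ} (hx : 0 < x) :
    gf δ x = (Real.cos (thf δ x) / 2 - δ * Real.sin (thf δ x)) / Real.sqrt x := by
  have hs0 : Real.sqrt x ≠ 0 := (Real.sqrt_pos.2 hx).ne'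
  have hms : Real.sqrt x * Real.sqrt x = x := Real.mul_self_sqrt hx.le
  unfold gf
  field_simp
  linear_combination (-2 * Real.sin (thf δ x) * δ) * hms

lemma gf_sq (δ : ℝ) {x : ℝ} (hx : 0 < x) :
    (gf δ x)^2 = (Real.cos (thf δ x) / 2 - δ * Real.sin (thf δ x))^2 / x := by
  rw [gf_eq δ hx, div_pow, Real.sq_sqrt hx.le]

lemma hasDerivAt_Ff (δ : ℝ) (hδ : 0 < δ) {x : ℝ} (hx : 0 < x) :
    HasDerivAt (Ff δ) ((gf δ x)^2) x := by
  have hth : HasDerivAt (fun y => 2 * thf δ y) (2 * (δ * x⁻¹)) x :=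
    (hasDerivAt_thf δ hx.ne').const_mul 2
  have hs := (Real.hasDerivAt_sin (2 * thf δ x)).comp x hth
  have hc := (Real.hasDerivAt_cos (2 * thf δ x)).comp x hth
  have hl := Real.hasDerivAt_log hx.ne'
  have H : HasDerivAt (Ff δ)
      ((1/8 + δ^2/2) * x⁻¹ + (1/8 - δ^2/2)/(2*δ) * (Real.cos (2 * thf δ x) * (2 * (δ * x⁻¹)))
        + 1/4 * (-Real.sin (2 * thf δ x) * (2 * (δ * x⁻¹)))) x := by
    unfold Ff
    exact ((hl.const_mul (1/8 + δ^2/2)).add (hs.const_mul ((1/8 - δ^2/2)/(2*δ)))).add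
      (hc.const_mul (1/4))
  have key : (1/8 + δ^2/2) * x⁻¹ + (1/8 - δ^2/2)/(2*δ) * (Real.cos (2 * thf δ x) * (2 * (δ * x⁻¹)))
      + 1/4 * (-Real.sin (2 * thf δ x) * (2 * (δ * x⁻¹))) = (gf δ x)^2 := by
    rw [gf_sq δ hx, Real.cos_two_mul, Real.sin_two_mul]
    have hpy := Real.sin_sq_add_cos_sq (thf δ x)
    field_simp
    linear_combination (-128 * δ^2) * hpy
  rw [key] at H
  exact H

lemma hasDerivAt_Hf (δ : ℝ) (hδ : 0 < δ) {x : ℝ} (hx : 0 < x) :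
    HasDerivAt (Hf δ) ((Gf δ x)^2 / x^2) x := by
  have hth : HasDerivAt (fun y => 2 * thf δ y) (2 * (δ * x⁻¹)) x :=
    (hasDerivAt_thf δ hx.ne').const_mul 2
  have hs := (Real.hasDerivAt_sin (2 * thf δ x)).comp x hth
  have hl := Real.hasDerivAt_log hx.ne'
  have H : HasDerivAt (Hf δ)
      ((1/2 : ℝ) * x⁻¹ + 1/(4*δ) * (Real.cos (2 * thf δ x) * (2 * (δ * x⁻¹)))) x := by
    unfold Hf
    exact (hl.const_mul (1/2 : ℝ)).add (hs.const_mul (1/(4*δ)))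
  have key : (1/2 : ℝ) * x⁻¹ + 1/(4*δ) * (Real.cos (2 * thf δ x) * (2 * (δ * x⁻¹)))
      = (Gf δ x)^2 / x^2 := by
    unfold Gf
    rw [mul_pow, Real.sq_sqrt hx.le, Real.cos_two_mul]
    have hpy := Real.sin_sq_add_cos_sq (thf δ x)
    field_simp
    linear_combination (0:ℝ) * hpy
  rw [key] at H
  exact H

lemma contAt_thf (δ : ℝ) {x : ℝ} (hx : x ≠ 0) : ContinuousAt (thf δ) x :=
  (hasDerivAt_thf δ hx).continuousAt

lemma contAt_gf (δ : ℝ) {x : ℝ} (hx : 0 < x) : ContinuousAt (gf δ) x := by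
  have h1 : ContinuousAt (fun y => Real.cos (thf δ y)) x :=
    Real.continuous_cos.continuousAt.comp (contAt_thf δ hx.ne')
  have h2 : ContinuousAt (fun y => Real.sin (thf δ y)) x :=
    Real.continuous_sin.continuousAt.comp (contAt_thf δ hx.ne')
  have hs : ContinuousAt Real.sqrt x := Real.continuous_sqrt.continuousAt
  have hs0 : (2 : ℝ) * Real.sqrt x ≠ 0 := by positivity
  have hinv : ContinuousAt (fun y : ℝ => y⁻¹) x := continuousAt_inv₀ hx.ne'
  exact ((continuousAt_const.div (continuousAt_const.mul hs) hs0).mul h1).add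
    (hs.mul ((h2.neg).mul (continuousAt_const.mul hinv)))

lemma contAt_Gf (δ : ℝ) {x : ℝ} (hx : 0 < x) : ContinuousAt (Gf δ) x :=
  Real.continuous_sqrt.continuousAt.mul
    (Real.continuous_cos.continuousAt.comp (contAt_thf δ hx.ne'))

lemma contOn_gf_sq (δ : ℝ) {a b : ℝ} (ha : 0 < a) :
    ContinuousOn (fun x => (gf δ x)^2) (Icc a b) := fun x hx =>
  (((contAt_gf δ (lt_of_lt_of_le ha hx.1)).pow 2)).continuousWithinAt

lemma contOn_gf (δ : ℝ) {a b : ℝ} (ha : 0 < a) :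
    ContinuousOn (gf δ) (Icc a b) := fun x hx =>
  (contAt_gf δ (lt_of_lt_of_le ha hx.1)).continuousWithinAt

lemma contOn_Gf_ratio (δ : ℝ) {a b : ℝ} (ha : 0 < a) :
    ContinuousOn (fun x => (Gf δ x)^2 / x^2) (Icc a b) := fun x hx => by
  have hx0 : 0 < x := lt_of_lt_of_le ha hx.1
  have hp : ContinuousAt (fun y : ℝ => y^2) x := (continuous_pow 2).continuousAt
  exact (((contAt_Gf δ hx0).pow 2).div hp (by positivity)).continuousWithinAt

def vf (h δ : ℝ) : ℝ → ℝ := fun x =>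
  if x ≤ h then Real.cos (thf δ h) / Real.sqrt h else gf δ x

lemma Ff_one (δ : ℝ) (hδ : 0 < δ) : Ff δ 1 = 0 := by
  have hS : Real.sqrt (1 + (1/(2*δ))^2) > 0 := Real.sqrt_pos.2 (by positivity)
  have hS2 : Real.sqrt (1 + (1/(2*δ))^2) ^ 2 = 1 + (1/(2*δ))^2 :=
    Real.sq_sqrt (by positivity)
  unfold Ff thf
  simp only [Real.log_one, mul_zero, add_zero]
  rw [ Real.sin_two_mul, Real.cos_two_mul,
    Real.sin_arctan, Real.cos_arctan]
  field_simp
  rw [Real.sq_sqrt (by positivity)]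
  field_simp
  ring
    
lemma Hf_one (δ : ℝ) (hδ : 0 < δ) : Hf δ 1 = 1/(4*δ^2+1) := by
  have hS : Real.sqrt (1 + (1/(2*δ))^2) > 0 := Real.sqrt_pos.2 (by positivity)
  have hS2 : Real.sqrt (1 + (1/(2*δ))^2) ^ 2 = 1 + (1/(2*δ))^2 :=
    Real.sq_sqrt (by positivity)
  unfold Hf thf
  simp only [Real.log_one, mul_zero, add_zero]
  rw [ Real.sin_two_mul, Real.sin_arctan, Real.cos_arctan]
  field_simp
  rw [Real.sq_sqrt (by positivity)]
  field_simp
  ring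

lemma keyid (h δ : ℝ) (hδ : 0 < δ)
    (hsc : δ * Real.sin (thf δ h) = (δ^2 - 1/4) * Real.cos (thf δ h)) :
    Real.cos (thf δ h)^2 + (Ff δ 1 - Ff δ h)
      = (1/4 + δ^2) * (Real.cos (thf δ h)^2 + (Hf δ 1 - Hf δ h)) := by
  rw [Ff_one δ hδ, Hf_one δ hδ]
  unfold Ff Hf
  rw [Real.sin_two_mul, Real.cos_two_mul]
  have h4 : (4*δ^2+1 : ℝ) ≠ 0 := by positivity
  field_simp
  linear_combination (256 * δ * (1 + 4*δ^2) * Real.cos (thf δ h)) * hsc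

/-- If `δ_h > 0` solves `1/4 + δ_h·tan(arctan(1/(2δ_h)) + δ_h·log h) − δ_h² = 0`
(angle in `(−π/2, π/2)`), then `u_h ∈ U_h`, `u_h` is not identically zero,
`∫₀¹ u_h'² = (1/4 + δ_h²)·∫₀¹ u_h²/x²`, and in particular `μ_h ≤ 1/4 + δ_h²`. -/
theorem uh_optimal (h δ : ℝ) (hh0 : 0 < h) (hh1 : h < 1) (hδ : 0 < δ)
    (hang : Real.arctan (1 / (2 * δ)) + δ * Real.log h ∈ Set.Ioo (-(π/2)) (π/2))
    (heq : 1/4 + δ * Real.tan (Real.arctan (1 / (2 * δ)) + δ * Real.log h) - δ ^ 2 = 0) :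
    (∃ u' : ℝ → ℝ, MemUh h (uh h δ) u' ∧
      (∫ x in (0:ℝ)..1, (u' x) ^ 2)
        = (1/4 + δ ^ 2) * ∫ x in (0:ℝ)..1, (uh h δ x) ^ 2 / x ^ 2) ∧
    (∃ x ∈ Set.Icc (0:ℝ) 1, uh h δ x ≠ 0) ∧
    muh h ≤ 1/4 + δ ^ 2 := by
  have hth : Real.arctan (1 / (2 * δ)) + δ * Real.log h = thf δ h := rfl
  rw [hth] at hang heq
  have hsh : 0 < Real.sqrt h := Real.sqrt_pos.2 hh0
  have hsh2 : Real.sqrt h ^ 2 = h := Real.sq_sqrt hh0.le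
  have hc : 0 < Real.cos (thf δ h) := Real.cos_pos_of_mem_Ioo hang
  set c := Real.cos (thf δ h) with hcdef
  have hsc : δ * Real.sin (thf δ h) = (δ^2 - 1/4) * c := by
    rw [Real.tan_eq_sin_div_cos] at heq
    field_simp [hc.ne', ← hcdef] at heq
    linear_combination heq/4 + (1/4 - δ^2) * hcdef
  -- basic unfoldings
  have huh_le : ∀ x : ℝ, x ≤ h → uh h δ x = (x / Real.sqrt h) * c := by
    intro x hx; unfold uh; rw [if_pos hx]; rfl
  have huh_gt : ∀ x : ℝ, ¬ x ≤ h → uh h δ x = Gf δ x := by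
    intro x hx; unfold uh; rw [if_neg hx]; rfl
  have hvf_le : ∀ x : ℝ, x ≤ h → vf h δ x = c / Real.sqrt h := by
    intro x hx; unfold vf; rw [if_pos hx]
  have hvf_gt : ∀ x : ℝ, ¬ x ≤ h → vf h δ x = gf δ x := by
    intro x hx; unfold vf; rw [if_neg hx]
  have huh_h : uh h δ h = Real.sqrt h * c := by
    rw [huh_le h le_rfl, Real.div_sqrt]
  have h00 : uh h δ 0 = 0 := by rw [huh_le 0 hh0.le, zero_div, zero_mul]
  -- integrability of vf
  have II1 : IntervalIntegrable (vf h δ) volume 0 h := by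
    rw [intervalIntegrable_iff_integrableOn_Ioc_of_le hh0.le]
    exact (integrableOn_const measure_Ioc_lt_top.ne).congr_fun
      (fun x hx => (hvf_le x hx.2).symm) measurableSet_Ioc
  have II2 : ∀ b : ℝ, h ≤ b → IntervalIntegrable (vf h δ) volume h b := by
    intro b hb
    rw [intervalIntegrable_iff_integrableOn_Ioc_of_le hb]
    exact (((contOn_gf δ (a := h) (b := b) hh0).integrableOn_Icc).mono_set
      Ioc_subset_Icc_self).congr_fun
      (fun x hx => (hvf_gt x (not_le.2 hx.1)).symm) measurableSet_Ioc
  have II : IntervalIntegrable (vf h δ) volume 0 1 := II1.trans (II2 1 hh1.le)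
  -- primitive property
  have hprim : ∀ x ∈ Icc (0:ℝ) 1, uh h δ x = ∫ t in (0:ℝ)..x, vf h δ t := by
    intro x hx
    rcases le_or_gt x h with hxh | hxh
    · have hEq : EqOn (vf h δ) (fun _ => c / Real.sqrt h) (Set.uIcc 0 x) := by
        intro t ht
        rw [Set.uIcc_of_le hx.1] at ht
        exact hvf_le t (le_trans ht.2 hxh)
      rw [intervalIntegral.integral_congr hEq, intervalIntegral.integral_const,
        huh_le x hxh, smul_eq_mul, sub_zero]
      ring
    · have hA : ∫ t in (0:ℝ)..h, vf h δ t = Real.sqrt h * c := by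
        have hEq : EqOn (vf h δ) (fun _ => c / Real.sqrt h) (Set.uIcc 0 h) := by
          intro t ht
          rw [Set.uIcc_of_le hh0.le] at ht
          exact hvf_le t ht.2
        rw [intervalIntegral.integral_congr hEq, intervalIntegral.integral_const,
          smul_eq_mul, sub_zero]
        field_simp
        linear_combination (-1:ℝ) * hsh2
      have hB : ∫ t in h..x, vf h δ t = Gf δ x - Real.sqrt h * c := by
        have : ∫ t in h..x, vf h δ t = ∫ t in h..x, gf δ t := by
          apply intervalIntegral.integral_congr_ae
          apply Eventually.of_forall
          intro t ht
          rw [Set.uIoc_of_le hxh.le] at ht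
          exact hvf_gt t (not_le.2 ht.1)
        rw [this, intervalIntegral.integral_eq_sub_of_hasDerivAt (f := Gf δ)
          (fun t ht => by
            rw [Set.uIcc_of_le hxh.le] at ht
            exact hasDerivAt_Gf δ (lt_of_lt_of_le hh0 ht.1))
          (by
            apply ContinuousOn.intervalIntegrable
            rw [Set.uIcc_of_le hxh.le]
            exact contOn_gf δ hh0)]
        rfl
      rw [← intervalIntegral.integral_add_adjacent_intervals II1 (II2 x hxh.le),
        hA, hB, huh_gt x (not_le.2 hxh)]
      ring
  -- continuity
  have hcont : ContinuousOn (uh h δ) (Icc 0 1) := by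
    have hint : IntegrableOn (vf h δ) (Set.uIcc 0 1) := by
      rw [Set.uIcc_of_le zero_le_one, integrableOn_Icc_iff_integrableOn_Ioc]
      exact II.1
    have hC := intervalIntegral.continuousOn_primitive_interval hint
    rw [Set.uIcc_of_le zero_le_one] at hC
    exact hC.congr fun x hx => hprim x hx
  -- integrability of vf^2
  have hsqIoo : IntegrableOn (fun t => (vf h δ t)^2) (Ioo 0 1) := by
    have h1 : IntegrableOn (fun t => (vf h δ t)^2) (Ioc 0 h) :=
      (integrableOn_const (C := (c / Real.sqrt h)^2) measure_Ioc_lt_top.ne).congr_fun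
        (fun x hx => by rw [hvf_le x hx.2]) measurableSet_Ioc
    have h2 : IntegrableOn (fun t => (vf h δ t)^2) (Ioc h 1) :=
      (((contOn_gf_sq δ (a := h) (b := 1) hh0).integrableOn_Icc).mono_set
        Ioc_subset_Icc_self).congr_fun
        (fun x hx => by rw [hvf_gt x (not_le.2 hx.1)]) measurableSet_Ioc
    exact (h1.union h2).mono_set fun x hx =>
      (le_or_gt x h).imp (fun hle => ⟨hx.1, hle⟩) (fun hgt => ⟨hgt, hx.2.le⟩)
  -- interval integrability of squares
  have IIsq1 : IntervalIntegrable (fun x => (vf h δ x)^2) volume 0 h := by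
    rw [intervalIntegrable_iff_integrableOn_Ioc_of_le hh0.le]
    exact (integrableOn_const (C := (c / Real.sqrt h)^2) measure_Ioc_lt_top.ne).congr_fun
      (fun x hx => by rw [hvf_le x hx.2]) measurableSet_Ioc
  have IIsq2 : IntervalIntegrable (fun x => (vf h δ x)^2) volume h 1 := by
    rw [intervalIntegrable_iff_integrableOn_Ioc_of_le hh1.le]
    exact (((contOn_gf_sq δ (a := h) (b := 1) hh0).integrableOn_Icc).mono_set
      Ioc_subset_Icc_self).congr_fun
      (fun x hx => by rw [hvf_gt x (not_le.2 hx.1)]) measurableSet_Ioc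
  have hratio : ∀ x ∈ Ioc (0:ℝ) h, (uh h δ x)^2 / x^2 = c^2 / h := by
    intro x hx
    rw [huh_le x hx.2, mul_pow, div_pow, hsh2]
    have hx0 : x ≠ 0 := hx.1.ne'
    field_simp
  have IIusq1 : IntervalIntegrable (fun x => (uh h δ x)^2 / x^2) volume 0 h := by
    rw [intervalIntegrable_iff_integrableOn_Ioc_of_le hh0.le]
    exact (integrableOn_const measure_Ioc_lt_top.ne).congr_fun
      (fun x hx => (hratio x hx).symm) measurableSet_Ioc
  have IIusq2 : IntervalIntegrable (fun x => (uh h δ x)^2 / x^2) volume h 1 := by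
    rw [intervalIntegrable_iff_integrableOn_Ioc_of_le hh1.le]
    exact (((contOn_Gf_ratio δ (a := h) (b := 1) hh0).integrableOn_Icc).mono_set
      Ioc_subset_Icc_self).congr_fun
      (fun x hx => by rw [huh_gt x (not_le.2 hx.1)]) measurableSet_Ioc
  -- the four integral evaluations
  have E1 : ∫ x in (0:ℝ)..h, (vf h δ x)^2 = c^2 := by
    have hEq : EqOn (fun x => (vf h δ x)^2) (fun _ => (c / Real.sqrt h)^2) (Set.uIcc 0 h) := by
      intro t ht
      rw [Set.uIcc_of_le hh0.le] at ht
      simp only [hvf_le t ht.2]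
    rw [intervalIntegral.integral_congr hEq, intervalIntegral.integral_const,
      smul_eq_mul, sub_zero, div_pow, hsh2]
    field_simp
  have E2 : ∫ x in h..1, (vf h δ x)^2 = Ff δ 1 - Ff δ h := by
    have : ∫ x in h..1, (vf h δ x)^2 = ∫ x in h..1, (gf δ x)^2 := by
      apply intervalIntegral.integral_congr_ae
      apply Eventually.of_forall
      intro t ht
      rw [Set.uIoc_of_le hh1.le] at ht
      rw [hvf_gt t (not_le.2 ht.1)]
    rw [this]
    apply intervalIntegral.integral_eq_sub_of_hasDerivAt
    · intro t ht
      rw [Set.uIcc_of_le hh1.le] at ht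
      exact hasDerivAt_Ff δ hδ (lt_of_lt_of_le hh0 ht.1)
    · apply ContinuousOn.intervalIntegrable
      rw [Set.uIcc_of_le hh1.le]
      exact contOn_gf_sq δ hh0
  have E3 : ∫ x in (0:ℝ)..h, (uh h δ x)^2 / x^2 = c^2 := by
    have : ∫ x in (0:ℝ)..h, (uh h δ x)^2 / x^2 = ∫ x in (0:ℝ)..h, c^2 / h := by
      apply intervalIntegral.integral_congr_ae
      apply Eventually.of_forall
      intro t ht
      rw [Set.uIoc_of_le hh0.le] at ht
      exact hratio t ht
    rw [this, intervalIntegral.integral_const, smul_eq_mul, sub_zero]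
    field_simp
  have E4 : ∫ x in h..1, (uh h δ x)^2 / x^2 = Hf δ 1 - Hf δ h := by
    have : ∫ x in h..1, (uh h δ x)^2 / x^2 = ∫ x in h..1, (Gf δ x)^2 / x^2 := by
      apply intervalIntegral.integral_congr_ae
      apply Eventually.of_forall
      intro t ht
      rw [Set.uIoc_of_le hh1.le] at ht
      rw [huh_gt t (not_le.2 ht.1)]
    rw [this]
    apply intervalIntegral.integral_eq_sub_of_hasDerivAt
    · intro t ht
      rw [Set.uIcc_of_le hh1.le] at ht
      exact hasDerivAt_Hf δ hδ (lt_of_lt_of_le hh0 ht.1)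
    · apply ContinuousOn.intervalIntegrable
      rw [Set.uIcc_of_le hh1.le]
      exact contOn_Gf_ratio δ hh0
  have Itot1 : ∫ x in (0:ℝ)..1, (vf h δ x)^2 = c^2 + (Ff δ 1 - Ff δ h) := by
    rw [← intervalIntegral.integral_add_adjacent_intervals IIsq1 IIsq2, E1, E2]
  have Itot2 : ∫ x in (0:ℝ)..1, (uh h δ x)^2 / x^2 = c^2 + (Hf δ 1 - Hf δ h) := by
    rw [← intervalIntegral.integral_add_adjacent_intervals IIusq1 IIusq2, E3, E4]
  have hMain : (∫ x in (0:ℝ)..1, (vf h δ x)^2)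
      = (1/4 + δ^2) * ∫ x in (0:ℝ)..1, (uh h δ x)^2 / x^2 := by
    rw [Itot1, Itot2]
    exact keyid h δ hδ hsc
  -- MemUh
  have hMem : MemUh h (uh h δ) (vf h δ) := by
    refine ⟨⟨hcont, II, hsqIoo, ?_⟩, h00, ?_⟩
    · intro x hx
      rw [h00, zero_add]
      exact hprim x hx
    · intro x hx
      rw [huh_le x hx.2, huh_h]
      field_simp
      linear_combination -x * hsh2
  have hnz : ∃ x ∈ Set.Icc (0:ℝ) 1, uh h δ x ≠ 0 :=
    ⟨h, ⟨hh0.le, hh1.le⟩, by rw [huh_h]; exact (mul_pos hsh hc).ne'⟩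
  refine ⟨⟨vf h δ, hMem, hMain⟩, hnz, ?_⟩
  -- the infimum bound
  have hDpos : 0 < ∫ x in (0:ℝ)..1, (uh h δ x)^2 / x^2 := by
    rw [Itot2]
    have h2 : 0 ≤ Hf δ 1 - Hf δ h := by
      rw [← E4]
      apply intervalIntegral.integral_nonneg hh1.le
      intro u hu
      positivity
    nlinarith [pow_pos hc 2]
  have hbdd : BddBelow { s : ℝ | ∃ u u' : ℝ → ℝ, MemUh h u u' ∧
      (∃ x ∈ Set.Icc (0:ℝ) 1, u x ≠ 0) ∧
      s = (∫ x in (0:ℝ)..1, (u' x) ^ 2) / (∫ x in (0:ℝ)..1, (u x) ^ 2 / x ^ 2) } := by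
    refine ⟨0, ?_⟩
    rintro s ⟨u, u', -, -, rfl⟩
    exact div_nonneg
      (intervalIntegral.integral_nonneg zero_le_one fun t ht => sq_nonneg _)
      (intervalIntegral.integral_nonneg zero_le_one fun t ht => by positivity)
  have hmem : (1/4 + δ^2 : ℝ) ∈ { s : ℝ | ∃ u u' : ℝ → ℝ, MemUh h u u' ∧
      (∃ x ∈ Set.Icc (0:ℝ) 1, u x ≠ 0) ∧
      s = (∫ x in (0:ℝ)..1, (u' x) ^ 2) / (∫ x in (0:ℝ)..1, (u x) ^ 2 / x ^ 2) } := by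
    refine ⟨uh h δ, vf h δ, hMem, hnz, ?_⟩
    rw [hMain, mul_div_cancel_right₀ _ hDpos.ne']
  exact csInf_le hbdd hmem
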